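/- Let T^{αβ} be a constant symmetric quadratic form on ℝ^4 satisfying the null condition: T^{αβ} ξ_α ξ_β = 0 whenever ξ_0² = Σ_a ξ_a². Then there is a constant C such that for all (t, x) in the interior cone Λ' = {|x| ≤ t − 1}, the one-frame component T̲^{00} := T^{αβ} Ψ_α^0 Ψ_β^0 = T^{00} − Σ_a (x^a/t)(T^{a0} + T^{0a}) + Σ_{a,b} (x^a/t)(x^b/t) T^{ab} satisfies |T̲^{00}| ≤ C·max_{α,β}|T^{αβ}|·(t² − |x|²)/t². -/

import Mathlib

section Aux

variable (T : Fin 4 → Fin 4 → ℝ)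

private lemma null_vanish
    (hnull : ∀ ξ : Fin 4 → ℝ, (ξ 0) ^ 2 = ∑ a : Fin 3, (ξ a.succ) ^ 2 →
      ∑ α : Fin 4, ∑ β : Fin 4, T α β * ξ α * ξ β = 0)
    (ξ : Fin 4 → ℝ) (h : (ξ 0) ^ 2 = (ξ 1)^2 + (ξ 2)^2 + (ξ 3)^2) :
    T 0 0 * ξ 0 * ξ 0 + T 0 1 * ξ 0 * ξ 1 + T 0 2 * ξ 0 * ξ 2 + T 0 3 * ξ 0 * ξ 3
    + T 1 0 * ξ 1 * ξ 0 + T 1 1 * ξ 1 * ξ 1 + T 1 2 * ξ 1 * ξ 2 + T 1 3 * ξ 1 * ξ 3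
    + T 2 0 * ξ 2 * ξ 0 + T 2 1 * ξ 2 * ξ 1 + T 2 2 * ξ 2 * ξ 2 + T 2 3 * ξ 2 * ξ 3
    + T 3 0 * ξ 3 * ξ 0 + T 3 1 * ξ 3 * ξ 1 + T 3 2 * ξ 3 * ξ 2 + T 3 3 * ξ 3 * ξ 3 = 0 := by
  have := hnull ξ (by simp [Fin.sum_univ_three]; rw [h])
  simp [Fin.sum_univ_four] at this
  linarith

end Aux

set_option maxHeartbeats 1000000

/-- A constant symmetric quadratic form satisfying the Minkowski null condition
has one-frame `(0,0)`-component bounded by `C · max|T| · (t² − |x|²)/t²` in the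
interior cone `Λ' = {|x| ≤ t − 1}`. -/
theorem null_form_decay (T : Fin 4 → Fin 4 → ℝ)
    (hsymm : ∀ α β, T α β = T β α)
    (hnull : ∀ ξ : Fin 4 → ℝ, (ξ 0) ^ 2 = ∑ a : Fin 3, (ξ a.succ) ^ 2 →
      ∑ α : Fin 4, ∑ β : Fin 4, T α β * ξ α * ξ β = 0) :
    ∃ C : ℝ, ∀ (t : ℝ) (x : Fin 3 → ℝ),
      Real.sqrt (∑ a : Fin 3, (x a) ^ 2) ≤ t - 1 →
      |T 0 0 - (∑ a : Fin 3, (x a / t) * (T a.succ 0 + T 0 a.succ))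
          + ∑ a : Fin 3, ∑ b : Fin 3, (x a / t) * (x b / t) * T a.succ b.succ|
        ≤ C * (⨆ q : Fin 4 × Fin 4, |T q.1 q.2|)
            * (t ^ 2 - ∑ a : Fin 3, (x a) ^ 2) / t ^ 2 := by
  -- structure lemmas
  have e1p := null_vanish T hnull ![1, 1, 0, 0] (by norm_num [Matrix.cons_val_zero, Matrix.cons_val_one, Matrix.head_cons, Matrix.cons_val_two, Matrix.tail_cons, Matrix.cons_val_three])
  have e1m := null_vanish T hnull ![1, -1, 0, 0] (by norm_num [Matrix.cons_val_zero, Matrix.cons_val_one, Matrix.head_cons, Matrix.cons_val_two, Matrix.tail_cons, Matrix.cons_val_three])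
  have e2p := null_vanish T hnull ![1, 0, 1, 0] (by norm_num [Matrix.cons_val_zero, Matrix.cons_val_one, Matrix.head_cons, Matrix.cons_val_two, Matrix.tail_cons, Matrix.cons_val_three])
  have e2m := null_vanish T hnull ![1, 0, -1, 0] (by norm_num [Matrix.cons_val_zero, Matrix.cons_val_one, Matrix.head_cons, Matrix.cons_val_two, Matrix.tail_cons, Matrix.cons_val_three])
  have e3p := null_vanish T hnull ![1, 0, 0, 1] (by norm_num [Matrix.cons_val_zero, Matrix.cons_val_one, Matrix.head_cons, Matrix.cons_val_two, Matrix.tail_cons, Matrix.cons_val_three])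
  have e3m := null_vanish T hnull ![1, 0, 0, -1] (by norm_num [Matrix.cons_val_zero, Matrix.cons_val_one, Matrix.head_cons, Matrix.cons_val_two, Matrix.tail_cons, Matrix.cons_val_three])
  have e12 := null_vanish T hnull ![5, 3, 4, 0] (by norm_num [Matrix.cons_val_zero, Matrix.cons_val_one, Matrix.head_cons, Matrix.cons_val_two, Matrix.tail_cons, Matrix.cons_val_three])
  have e13 := null_vanish T hnull ![5, 3, 0, 4] (by norm_num [Matrix.cons_val_zero, Matrix.cons_val_one, Matrix.head_cons, Matrix.cons_val_two, Matrix.tail_cons, Matrix.cons_val_three])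
  have e23 := null_vanish T hnull ![5, 0, 3, 4] (by norm_num [Matrix.cons_val_zero, Matrix.cons_val_one, Matrix.head_cons, Matrix.cons_val_two, Matrix.tail_cons, Matrix.cons_val_three])
  simp only [Matrix.cons_val_zero, Matrix.cons_val_one, Matrix.head_cons,
    Matrix.cons_val_two, Matrix.tail_cons, Matrix.cons_val_three] at e1p e1m e2p e2m e3p e3m e12 e13 e23
  ring_nf at e1p e1m e2p e2m e3p e3m e12 e13 e23
  have h10 : T 1 0 + T 0 1 = 0 := by linarith
  have h20 : T 2 0 + T 0 2 = 0 := by linarith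
  have h30 : T 3 0 + T 0 3 = 0 := by linarith
  have h11 : T 1 1 = -T 0 0 := by linarith
  have h22 : T 2 2 = -T 0 0 := by linarith
  have h33 : T 3 3 = -T 0 0 := by linarith
  have h12 : T 1 2 = 0 := by have := hsymm 1 2; linarith
  have h13 : T 1 3 = 0 := by have := hsymm 1 3; linarith
  have h23 : T 2 3 = 0 := by have := hsymm 2 3; linarith
  have h21 : T 2 1 = 0 := by rw [hsymm 2 1]; exact h12
  have h31 : T 3 1 = 0 := by rw [hsymm 3 1]; exact h13
  have h32 : T 3 2 = 0 := by rw [hsymm 3 2]; exact h23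
  refine ⟨1, fun t x hx => ?_⟩
  set r2 : ℝ := ∑ a : Fin 3, (x a) ^ 2 with hr2
  have hr2nn : 0 ≤ r2 := Finset.sum_nonneg fun a _ => sq_nonneg _
  have hsq : 0 ≤ Real.sqrt r2 := Real.sqrt_nonneg _
  have ht1 : 1 ≤ t := by linarith
  have ht0 : (0:ℝ) < t := by linarith
  have htr : r2 ≤ t ^ 2 := by
    have : Real.sqrt r2 ≤ t := by linarith
    calc r2 = (Real.sqrt r2) ^ 2 := (Real.sq_sqrt hr2nn).symm
      _ ≤ t ^ 2 := by nlinarith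
  -- compute the expression
  have hE : T 0 0 - (∑ a : Fin 3, (x a / t) * (T a.succ 0 + T 0 a.succ))
      + ∑ a : Fin 3, ∑ b : Fin 3, (x a / t) * (x b / t) * T a.succ b.succ
      = T 0 0 * ((t ^ 2 - r2) / t ^ 2) := by
    simp only [Fin.sum_univ_three, show (0:Fin 3).succ = 1 from rfl,
      show (1:Fin 3).succ = 2 from rfl, show (2:Fin 3).succ = 3 from rfl,
      h10, h20, h30, h11, h22, h33, h12, h13, h23, h21, h31, h32, hr2]
    field_simp
    ring
  rw [hE, abs_mul]
  have hfrac : |((t ^ 2 - r2) / t ^ 2)| = (t ^ 2 - r2) / t ^ 2 := by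
    rw [abs_of_nonneg]
    exact div_nonneg (by linarith) (by positivity)
  rw [hfrac]
  have hM : |T 0 0| ≤ ⨆ q : Fin 4 × Fin 4, |T q.1 q.2| :=
    le_ciSup (f := fun q : Fin 4 × Fin 4 => |T q.1 q.2|)
      (Set.Finite.bddAbove (Set.finite_range _)) (0, 0)
  have hfracnn : 0 ≤ (t ^ 2 - r2) / t ^ 2 := div_nonneg (by linarith) (by positivity)
  calc |T 0 0| * ((t ^ 2 - r2) / t ^ 2)
      ≤ (⨆ q : Fin 4 × Fin 4, |T q.1 q.2|) * ((t ^ 2 - r2) / t ^ 2) :=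
        mul_le_mul_of_nonneg_right hM hfracnn
    _ = 1 * (⨆ q : Fin 4 × Fin 4, |T q.1 q.2|) * (t ^ 2 - r2) / t ^ 2 := by ring
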